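/- If f : [a,b] × [c,d] → ℝ is co-ordinated convex, then (1/4)[(1/(b-a))∫ₐᵇ f(x,c) dx + (1/(b-a))∫ₐᵇ f(x,d) dx + (1/(d-c))∫_c^d f(a,y) dy + (1/(d-c))∫_c^d f(b,y) dy] ≤ (f(a,c) + f(a,d) + f(b,c) + f(b,d))/4. -/

import Mathlib

open Set MeasureTheory

lemma hh_right (a b : ℝ) (hab : a < b) (g : ℝ → ℝ)
    (hg : ConvexOn ℝ (Icc a b) g) (hi : IntervalIntegrable g volume a b) :
    (1/(b-a)) * ∫ x in a..b, g x ≤ (g a + g b) / 2 := by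
  have hba : (0:ℝ) < b - a := by linarith
  have key : ∫ x in a..b, g x ≤ ∫ x in a..b,
      ((b - x) / (b - a)) * g a + ((x - a) / (b - a)) * g b := by
    apply intervalIntegral.integral_mono_on hab.le hi
    · apply IntervalIntegrable.add <;>
      · apply IntervalIntegrable.mul_const
        apply Continuous.intervalIntegrable
        continuity
    · intro x hx
      obtain ⟨hax, hxb⟩ := hx
      have h1 : (0:ℝ) ≤ (b - x) / (b - a) := div_nonneg (by linarith) hba.le
      have h2 : (0:ℝ) ≤ (x - a) / (b - a) := div_nonneg (by linarith) hba.le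
      have hsum : (b - x) / (b - a) + (x - a) / (b - a) = 1 := by
        field_simp
        ring
      have := hg.2 (left_mem_Icc.2 hab.le) (right_mem_Icc.2 hab.le) h1 h2 hsum
      simpa [smul_eq_mul, show (b - x) / (b - a) * a + (x - a) / (b - a) * b = x by
        field_simp; ring] using this
  have hval : (∫ x in a..b, ((b - x) / (b - a)) * g a + ((x - a) / (b - a)) * g b)
      = (b - a) * ((g a + g b) / 2) := by
    rw [intervalIntegral.integral_add, intervalIntegral.integral_mul_const,
      intervalIntegral.integral_mul_const]
    · have e1 : ∫ x in a..b, (b - x) / (b - a) = (b - a) / 2 := by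
        have h : ∀ x : ℝ, (b - x) / (b - a) = (1/(b-a)) * b - (1/(b-a)) * x := by
          intro x; field_simp
        simp only [h]
        rw [intervalIntegral.integral_sub, intervalIntegral.integral_const_mul,
          intervalIntegral.integral_const_mul, integral_id]
        · simp only [intervalIntegral.integral_const, smul_eq_mul]
          field_simp
          ring
        · exact (IntervalIntegrable.const_mul (intervalIntegrable_const) _)
        · exact (IntervalIntegrable.const_mul (intervalIntegral.intervalIntegrable_id) _)
      have e2 : ∫ x in a..b, (x - a) / (b - a) = (b - a) / 2 := by
        have h : ∀ x : ℝ, (x - a) / (b - a) = (1/(b-a)) * x - (1/(b-a)) * a := by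
          intro x; field_simp
        simp only [h]
        rw [intervalIntegral.integral_sub, intervalIntegral.integral_const_mul,
          intervalIntegral.integral_const_mul, integral_id]
        · simp only [intervalIntegral.integral_const, smul_eq_mul]
          field_simp
          ring
        · exact (IntervalIntegrable.const_mul (intervalIntegral.intervalIntegrable_id) _)
        · exact (IntervalIntegrable.const_mul (intervalIntegrable_const) _)
      rw [e1, e2]; ring
    · apply IntervalIntegrable.mul_const
      apply Continuous.intervalIntegrable; continuity
    · apply IntervalIntegrable.mul_const
      apply Continuous.intervalIntegrable; continuity
  rw [hval] at key
  rw [div_mul_eq_mul_div, div_le_iff₀ hba]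
  linarith

theorem hadamard_coordinated_fourth
    (a b c d : ℝ) (hab : a < b) (hcd : c < d) (f : ℝ → ℝ → ℝ)
    (h1 : ∀ y ∈ Icc c d, ConvexOn ℝ (Icc a b) (fun x => f x y))
    (h2 : ∀ x ∈ Icc a b, ConvexOn ℝ (Icc c d) (fun y => f x y))
    (hbc : IntervalIntegrable (fun x => f x c) volume a b)
    (hbd : IntervalIntegrable (fun x => f x d) volume a b)
    (hba : IntervalIntegrable (fun y => f a y) volume c d)
    (hbb : IntervalIntegrable (fun y => f b y) volume c d) :
    (1/4) * ((1/(b-a)) * ∫ x in a..b, f x c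
        + (1/(b-a)) * ∫ x in a..b, f x d
        + (1/(d-c)) * ∫ y in c..d, f a y
        + (1/(d-c)) * ∫ y in c..d, f b y) ≤
      (f a c + f a d + f b c + f b d) / 4 := by
  have hba' : (0:ℝ) < b - a := by linarith
  have hdc' : (0:ℝ) < d - c := by linarith
  have A := hh_right a b hab _ (h1 c (left_mem_Icc.2 hcd.le)) hbc
  have B := hh_right a b hab _ (h1 d (right_mem_Icc.2 hcd.le)) hbd
  have C := hh_right c d hcd _ (h2 a (left_mem_Icc.2 hab.le)) hba
  have D := hh_right c d hcd _ (h2 b (right_mem_Icc.2 hab.le)) hbb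
  set I1 := ∫ x in a..b, f x c with hI1
  set I2 := ∫ x in a..b, f x d with hI2
  set I3 := ∫ y in c..d, f a y with hI3
  set I4 := ∫ y in c..d, f b y with hI4
  have e3 : (∫ y in c..d, (f a y + (1/(d-c)) * ∫ y in c..d, f b y))
      = I3 + I4 := by
    rw [intervalIntegral.integral_add hba intervalIntegrable_const,
      intervalIntegral.integral_const, smul_eq_mul, ← hI3, ← hI4]
    field_simp
  have e2 : (∫ x in a..b, (f x d + (1/(d-c)) * ∫ y in c..d, (f a y
      + (1/(d-c)) * ∫ y in c..d, f b y)))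
      = I2 + ((b-a)/(d-c)) * (I3 + I4) := by
    rw [intervalIntegral.integral_add hbd intervalIntegrable_const,
      intervalIntegral.integral_const, smul_eq_mul, e3, ← hI2]
    ring
  have e1 : (∫ x in a..b, (f x c + (1/(b-a)) * ∫ x in a..b, (f x d
      + (1/(d-c)) * ∫ y in c..d, (f a y + (1/(d-c)) * ∫ y in c..d, f b y))))
      = I1 + I2 + ((b-a)/(d-c)) * (I3 + I4) := by
    rw [intervalIntegral.integral_add hbc intervalIntegrable_const,
      intervalIntegral.integral_const, smul_eq_mul, e2, ← hI1]
    field_simp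
    ring
  rw [e1]
  have eq1 : (1:ℝ)/4 * (1/(b-a) * (I1 + I2 + ((b-a)/(d-c)) * (I3 + I4)))
      = 1/4 * (1/(b-a) * I1 + 1/(b-a) * I2 + 1/(d-c) * I3 + 1/(d-c) * I4) := by
    field_simp
    ring
  rw [eq1]
  linarith
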